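/- Let B, W, U be vertex sets in a layered spreading DAG G such that U ∪ W hides B and U ∪ W is tight and hiding-connected. Then there exists a vertex set U* such that U* ∪ W hides B, U* ≾_m U, and either U* = B or |U*| < |B| + |W|. -/

import Mathlib

/-- A layered DAG: vertices are partitioned into levels `0, 1, ..., height`,
every edge goes from some level `L - 1` to level `L` (`pred v` is the finite
set of immediate predecessors of `v`), all sources are on level `0`, and there
is a unique sink, located on the top level. -/
structure LGraph (V : Type) where
  pred : V → Finset V
  height : ℕ
  lvl : V → ℕ
  lvl_le : ∀ v, lvl v ≤ height
  edge_lvl : ∀ u v, u ∈ pred v → lvl v = lvl u + 1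
  source_lvl : ∀ v, pred v = ∅ ↔ lvl v = 0
  sink : V
  sink_unique : ∀ v, (∀ w, v ∉ pred w) ↔ v = sink
  sink_lvl : lvl sink = height
/-- `l` is a path from a source to `w` (in a graph given by its immediate
predecessor function `pred`): consecutive vertices are joined by edges, the
first vertex is a source, and the last vertex is `w`. -/
def IsSourcePath {V : Type} (pred : V → Finset V) (l : List V) (w : V) : Prop :=
  l.Chain' (fun a b => a ∈ pred b) ∧ (∃ s, l.head? = some s ∧ pred s = ∅) ∧
    l.getLast? = some w

/-- A vertex set `U` hides the vertex `w` if every path from a source to `w`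
intersects `U`. -/
def Hides {V : Type} (pred : V → Finset V) (U : Set V) (w : V) : Prop :=
  ∀ l : List V, IsSourcePath pred l w → ∃ u ∈ U, u ∈ l

/-- `U` hides the vertex set `B` if it hides every vertex of `B`. -/
def HidesSet {V : Type} (pred : V → Finset V) (U B : Set V) : Prop :=
  ∀ w ∈ B, Hides pred U w

/-- `Reaches pred u v` : the vertex `v` is reachable from `u`. -/
def Reaches {V : Type} (pred : V → Finset V) : V → V → Prop :=
  Relation.ReflTransGen fun a b => a ∈ pred b
/-- The `j`-th partial measure of a vertex set `U` in a layered DAG: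
`j + 2·|U^{≥j}|` if the part `U^{≥j}` of `U` on level `j` or higher is
nonempty, and `0` otherwise. -/
def mjMeasure {V : Type} (G : LGraph V) (U : Finset V) (j : ℕ) : ℕ :=
  if (U.filter fun u => j ≤ G.lvl u).Nonempty then
    j + 2 * (U.filter fun u => j ≤ G.lvl u).card
  else 0

/-- The measure of a vertex set `U`: the maximum of its partial measures. -/
def klMeasure {V : Type} (G : LGraph V) (U : Finset V) : ℕ :=
  (Finset.range (G.height + 1)).sup (mjMeasure G U)

/-- The potential of a black-white pebble configuration `(B, W)`: the minimum
measure of a vertex set `U` such that `U ∪ W` hides `B`. -/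
noncomputable def pot {V : Type} [DecidableEq V] (G : LGraph V) (B W : Finset V) : ℕ :=
  sInf { m | ∃ U : Finset V, HidesSet G.pred (↑(U ∪ W)) (↑B) ∧ klMeasure G U = m }
/-- A vertex set `X` is tight if no `u ∈ X` is hidden by `X \ {u}`. -/
def Tight {V : Type} [DecidableEq V] (G : LGraph V) (X : Finset V) : Prop :=
  ∀ u ∈ X, ¬ Hides G.pred (↑(X.erase u)) u

/-- The set of all vertices hidden by `X`. -/
def hiddenSet {V : Type} (G : LGraph V) (X : Finset V) : Set V :=
  { w | Hides G.pred (↑X) w }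

/-- `X⌈x⌉`: the set of `u ∈ X` such that some source path to `x` intersects
`X` exactly in `{u}`. -/
def nhsSet {V : Type} [DecidableEq V] (G : LGraph V) (X : Finset V) (x : V) : Set V :=
  { u | u ∈ X ∧ ∃ l : List V, IsSourcePath G.pred l x ∧ u ∈ l ∧ ∀ y ∈ X, y ∈ l → y = u }

/-- The edge relation of the hiding set graph `H(G, X)`: vertices `x, y` (both
hidden by `X`) are adjacent when the set of vertices below `x` hidden by
`X⌈x⌉` intersects the set of vertices below `y` hidden by `X⌈y⌉`. -/
def HSAdj {V : Type} [DecidableEq V] (G : LGraph V) (X : Finset V) (x y : V) : Prop :=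
  x ∈ hiddenSet G X ∧ y ∈ hiddenSet G X ∧
    ∃ w, Reaches G.pred w x ∧ Hides G.pred (nhsSet G X x) w ∧
      Reaches G.pred w y ∧ Hides G.pred (nhsSet G X y) w

/-- `X` is hiding-connected if the hiding set graph `H(G, X)` is connected. -/
def HidingConnected {V : Type} [DecidableEq V] (G : LGraph V) (X : Finset V) : Prop :=
  ∀ x ∈ hiddenSet G X, ∀ y ∈ hiddenSet G X, Relation.ReflTransGen (HSAdj G X) x y

/-- `h_j(Y)`: the minimum size of a vertex set with all vertices on level `j`
or higher hiding every vertex of `Y` on level `j` or higher. -/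
noncomputable def hLevel {V : Type} (G : LGraph V) (j : ℕ) (Y : Set V) : ℕ :=
  sInf { n | ∃ Z : Finset V, (∀ z ∈ Z, j ≤ G.lvl z) ∧
      (∀ y ∈ Y, j ≤ G.lvl y → Hides G.pred (↑Z) y) ∧ Z.card = n }

/-- The lowest level of any vertex in `X`. -/
noncomputable def minLvl {V : Type} (G : LGraph V) (X : Finset V) : ℕ :=
  sInf (G.lvl '' (↑X : Set V))

/-- The highest level of any vertex hidden by `X`. -/
noncomputable def maxLvlHidden {V : Type} (G : LGraph V) (X : Finset V) : ℕ :=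
  sSup (G.lvl '' hiddenSet G X)

/-- A layered DAG is a spreading graph if for every (nonempty) hiding-connected
tight vertex set `X` and every level `j` with `1 ≤ j ≤ maxlevel(hidden(X))`,
the spreading inequality `|X| ≥ h_j(hidden(X)) + j − minlevel(X)` holds. -/
def Spreading {V : Type} [DecidableEq V] (G : LGraph V) : Prop :=
  ∀ X : Finset V, X.Nonempty → Tight G X → HidingConnected G X →
    ∀ j : ℕ, 1 ≤ j → j ≤ maxLvlHidden G X →
      hLevel G j (hiddenSet G X) + j ≤ X.card + minLvl G X

/-- `U ≾_m V`: for every `j ≥ 0` there is some `i ≤ j` with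
`m_j(U) ≤ m_i(V)`. -/
def MLe {V : Type} (G : LGraph V) (U W : Finset V) : Prop :=
  ∀ j : ℕ, ∃ i ≤ j, mjMeasure G U j ≤ mjMeasure G W i


set_option linter.unusedSectionVars false
set_option maxHeartbeats 1000000

section AuxLLHC
variable {V : Type} [DecidableEq V]

lemma mem_of_getLast?' {l : List V} {a : V} (h : l.getLast? = some a) : a ∈ l := by
  have hne : l ≠ [] := by rintro rfl; simp at h
  rw [List.getLast?_eq_getLast_of_ne_nil hne, Option.some_inj] at h
  exact h ▸ List.getLast_mem hne

lemma hides_self {pred : V → Finset V} {S : Set V} {b : V} (hb : b ∈ S) :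
    Hides pred S b := by
  intro l hl
  exact ⟨b, hb, mem_of_getLast?' hl.2.2⟩

lemma hides_mono {pred : V → Finset V} {S T : Set V} (hST : S ⊆ T) {b : V}
    (h : Hides pred S b) : Hides pred T b := by
  intro l hl
  obtain ⟨u, hu, hul⟩ := h l hl
  exact ⟨u, hST hu, hul⟩

lemma chain'_reflTransGen {R : V → V → Prop} :
    ∀ {l : List V}, l.Chain' R → ∀ {v}, v ∈ l → ∀ {w}, l.getLast? = some w →
      Relation.ReflTransGen R v w := by
  intro l
  induction l with
  | nil => simp
  | cons a t ih =>
    intro hc v hv w hw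
    cases t with
    | nil =>
      simp only [List.mem_singleton] at hv
      simp only [List.getLast?_singleton, Option.some_inj] at hw
      subst hv; subst hw; exact Relation.ReflTransGen.refl
    | cons b t' =>
      have hc' : (b :: t').Chain' R := hc.tail
      have hR : R a b := (List.isChain_cons_cons.mp hc).1
      have hw' : (b :: t').getLast? = some w := by
        rwa [List.getLast?_cons_cons] at hw
      rcases List.mem_cons.mp hv with rfl | hv'
      · exact Relation.ReflTransGen.head hR (ih hc' List.mem_cons_self hw')
      · exact ih hc' hv' hw'

lemma lvl_le_of_reaches (G : LGraph V) {v w : V}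
    (h : Relation.ReflTransGen (fun a b => a ∈ G.pred b) v w) :
    G.lvl v ≤ G.lvl w := by
  induction h with
  | refl => exact le_refl _
  | @tail b c _ hbc ih =>
    have := G.edge_lvl b c hbc
    omega

lemma lvl_le_of_mem_path (G : LGraph V) {l : List V} {w v : V}
    (hl : IsSourcePath G.pred l w) (hv : v ∈ l) : G.lvl v ≤ G.lvl w :=
  lvl_le_of_reaches G (chain'_reflTransGen hl.1 hv hl.2.2)

end AuxLLHC

def anc {V : Type} [DecidableEq V] (G : LGraph V) : ℕ → Finset V
  | 0 => {G.sink}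
  | n+1 => anc G n ∪ (anc G n).biUnion G.pred

section FinLLHC
variable {V : Type} [DecidableEq V] (G : LGraph V)

lemma anc_mono : ∀ n, anc G n ⊆ anc G (n+1) := fun _ => Finset.subset_union_left

lemma anc_le {a b : ℕ} (h : a ≤ b) : anc G a ⊆ anc G b := by
  induction b with
  | zero => simp [Nat.le_zero.mp h]
  | succ n ih =>
    rcases Nat.lt_or_ge a (n+1) with h' | h'
    · exact (ih (by omega)).trans (anc_mono G n)
    · have : a = n + 1 := by omega
      subst this; exact Finset.Subset.refl _

lemma sink_mem_anc : ∀ n, G.sink ∈ anc G n := by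
  intro n
  induction n with
  | zero => simp [anc]
  | succ n ih => exact anc_mono G n ih

lemma eq_sink_of_lvl {v : V} (h : G.lvl v = G.height) : v = G.sink := by
  by_contra hne
  have h2 : ¬ ∀ w, v ∉ G.pred w := fun hall => hne ((G.sink_unique v).mp hall)
  push_neg at h2
  obtain ⟨w, hw⟩ := h2
  have h3 := G.edge_lvl v w hw
  have h4 := G.lvl_le w
  omega

lemma mem_anc : ∀ n, ∀ v : V, G.lvl v + n = G.height → v ∈ anc G n := by
  intro n
  induction n with
  | zero =>
    intro v hv
    have : v = G.sink := eq_sink_of_lvl G (by omega)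
    simp [anc, this]
  | succ n ih =>
    intro v hv
    by_cases hvs : v = G.sink
    · subst hvs; exact sink_mem_anc G _
    · have h2 : ¬ ∀ w, v ∉ G.pred w := fun hall => hvs ((G.sink_unique v).mp hall)
      push_neg at h2
      obtain ⟨w, hw⟩ := h2
      have h3 := G.edge_lvl v w hw
      have hwmem := ih w (by omega)
      exact Finset.mem_union_right _ (Finset.mem_biUnion.mpr ⟨w, hwmem, hw⟩)

end FinLLHC

lemma finite_of_lgraph {V : Type} [DecidableEq V] (G : LGraph V) : Finite V := by
  have hsub : (Set.univ : Set V) ⊆ ↑(anc G G.height) := by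
    intro v _
    have h1 : v ∈ anc G (G.height - G.lvl v) :=
      mem_anc G _ v (by have := G.lvl_le v; omega)
    exact anc_le G (Nat.sub_le _ _) h1
  exact Set.finite_univ_iff.mp (Set.Finite.subset (anc G G.height).finite_toSet hsub)


/-- Let `B, W, U` be vertex sets in a layered spreading DAG
`G` such that `U ∪ W` hides `B` and `U ∪ W` is tight and hiding-connected.
Then there exists a vertex set `U*` such that `U* ∪ W` hides `B`,
`U* ≾_m U`, and either `U* = B` or `|U*| < |B| + |W|`. -/
theorem local_limited_hiding_cardinality {V : Type} [DecidableEq V]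
    (G : LGraph V) (hspread : Spreading G) (B W U : Finset V)
    (hhide : HidesSet G.pred (↑(U ∪ W)) (↑B))
    (htight : Tight G (U ∪ W))
    (hconn : HidingConnected G (U ∪ W)) :
    ∃ Ust : Finset V,
      HidesSet G.pred (↑(Ust ∪ W)) (↑B) ∧ MLe G Ust U ∧
      (Ust = B ∨ Ust.card < B.card + W.card) := by
  classical
  by_cases hB0 : B = ∅
  · refine ⟨∅, ?_, ?_, Or.inl hB0.symm⟩
    · intro w hw; subst hB0; simp at hw
    · intro j; exact ⟨j, le_rfl, by simp [mjMeasure]⟩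
  by_cases hcard : U.card < B.card + W.card
  · exact ⟨U, hhide, fun j => ⟨j, le_rfl, le_rfl⟩, Or.inr hcard⟩
  push_neg at hcard
  haveI hVfin : Finite V := finite_of_lgraph G
  have hBne : B.Nonempty := Finset.nonempty_iff_ne_empty.mpr hB0
  have hUne : U.Nonempty := by
    have h1 : 1 ≤ B.card := Finset.card_pos.mpr hBne
    exact Finset.card_pos.mp (by omega)
  have hXne : (U ∪ W).Nonempty := hUne.mono Finset.subset_union_left
  have hmle : ∀ u ∈ U ∪ W, minLvl G (U ∪ W) ≤ G.lvl u := by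
    intro u hu
    exact Nat.sInf_le ⟨u, by exact_mod_cast hu, rfl⟩
  have hBhid : ∀ b ∈ B, b ∈ hiddenSet G (U ∪ W) := fun b hb => hhide b (by exact_mod_cast hb)
  have hmaxb : ∀ b ∈ B, G.lvl b ≤ maxLvlHidden G (U ∪ W) := by
    intro b hb
    refine le_csSup ⟨G.height, ?_⟩ ⟨b, hBhid b hb, rfl⟩
    rintro y ⟨v, -, rfl⟩
    exact G.lvl_le v
  have hfamB : ∀ i : ℕ, ∃ Zc : Finset V, (∀ z ∈ Zc, i ≤ G.lvl z) ∧
      (∀ y ∈ (↑B : Set V), i ≤ G.lvl y → Hides G.pred (↑Zc) y) ∧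
      Zc.card = (B.filter fun b => i ≤ G.lvl b).card := by
    intro i
    refine ⟨B.filter fun b => i ≤ G.lvl b, fun z hz => (Finset.mem_filter.mp hz).2, ?_, rfl⟩
    intro y hy hyl
    refine hides_self (show y ∈ (↑(B.filter fun b => i ≤ G.lvl b) : Set V) from ?_)
    have hyB : y ∈ B := by exact_mod_cast hy
    exact Finset.mem_coe.mpr (Finset.mem_filter.mpr ⟨hyB, hyl⟩)
  have hBfam_le : ∀ i, hLevel G i (↑B : Set V) ≤ (B.filter fun b => i ≤ G.lvl b).card :=
    fun i => Nat.sInf_le (hfamB i)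
  have hBle : ∀ i, hLevel G i (↑B : Set V) ≤ B.card :=
    fun i => le_trans (hBfam_le i) (Finset.card_filter_le _ _)
  have hmem0 : hLevel G 0 (↑B : Set V) ∈ {n | ∃ Zc : Finset V, (∀ z ∈ Zc, 0 ≤ G.lvl z) ∧
      (∀ y ∈ (↑B : Set V), 0 ≤ G.lvl y → Hides G.pred (↑Zc) y) ∧ Zc.card = n} :=
    Nat.sInf_mem ⟨_, hfamB 0⟩
  obtain ⟨Z0, -, hZ0hide, hZ0card⟩ := hmem0
  have hZex : ∃ Z : Finset V, (∀ y ∈ (↑B : Set V), Hides G.pred (↑Z) y) ∧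
      Z.card = hLevel G 0 (↑B : Set V) ∧ (hLevel G 0 (↑B : Set V) = B.card → Z = B) := by
    by_cases hZB : hLevel G 0 (↑B : Set V) = B.card
    · exact ⟨B, fun y hy => hides_self hy, hZB.symm, fun _ => rfl⟩
    · exact ⟨Z0, fun y hy => hZ0hide y hy (Nat.zero_le _), hZ0card, fun h => absurd h hZB⟩
  obtain ⟨Z, hZhide, hZcard, hZeq⟩ := hZex
  have hNmin : ∀ Z' : Finset V, (∀ y ∈ (↑B : Set V), Hides G.pred (↑Z') y) →
      hLevel G 0 (↑B : Set V) ≤ Z'.card := by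
    intro Z' hZ'
    exact Nat.sInf_le ⟨Z', fun z _ => Nat.zero_le _, fun y hy _ => hZ' y hy, rfl⟩
  have hnest : ∀ i, (Z.filter fun z => i ≤ G.lvl z).card ≤ hLevel G i (↑B : Set V) := by
    intro i
    by_contra hlt
    push_neg at hlt
    have hmemi : hLevel G i (↑B : Set V) ∈ {n | ∃ Zc : Finset V, (∀ z ∈ Zc, i ≤ G.lvl z) ∧
        (∀ y ∈ (↑B : Set V), i ≤ G.lvl y → Hides G.pred (↑Zc) y) ∧ Zc.card = n} :=
      Nat.sInf_mem ⟨_, hfamB i⟩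
    obtain ⟨Y, hYlvl, hYhide, hYcard⟩ := hmemi
    have hZ'hide : ∀ y ∈ (↑B : Set V),
        Hides G.pred (↑(Z.filter (fun z => ¬ i ≤ G.lvl z) ∪ Y)) y := by
      intro b hbmem
      by_cases hbl : i ≤ G.lvl b
      · exact hides_mono (Finset.coe_subset.mpr Finset.subset_union_right) (hYhide b hbmem hbl)
      · intro l hl
        obtain ⟨z, hzZ, hzl⟩ := hZhide b hbmem l hl
        have hzb : G.lvl z ≤ G.lvl b := lvl_le_of_mem_path G hl hzl
        have hzZ' : z ∈ Z := Finset.mem_coe.mp hzZ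
        refine ⟨z, ?_, hzl⟩
        exact Finset.mem_coe.mpr (Finset.mem_union_left _
          (Finset.mem_filter.mpr ⟨hzZ', by omega⟩))
    have hmin := hNmin _ hZ'hide
    have hsplit := Finset.card_filter_add_card_filter_not
      (s := Z) (p := fun z => i ≤ G.lvl z)
    have hle := Finset.card_union_le (Z.filter (fun z => ¬ i ≤ G.lvl z)) Y
    omega
  have htop : ∀ z ∈ Z, ∃ b ∈ B, G.lvl z ≤ G.lvl b := by
    intro z hz
    by_contra hno
    push_neg at hno
    have herase : ∀ y ∈ (↑B : Set V), Hides G.pred (↑(Z.erase z)) y := by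
      intro b hbmem l hl
      obtain ⟨u, huZ, hul⟩ := hZhide b hbmem l hl
      have hub : G.lvl u ≤ G.lvl b := lvl_le_of_mem_path G hl hul
      have huZ' : u ∈ Z := Finset.mem_coe.mp huZ
      have hbB : b ∈ B := by exact_mod_cast hbmem
      have hune : u ≠ z := by
        intro h; subst h
        have h5 := hno b hbB
        omega
      exact ⟨u, Finset.mem_coe.mpr (Finset.mem_erase.mpr ⟨hune, huZ'⟩), hul⟩
    have h1 := hNmin _ herase
    have h2 : (Z.erase z).card < Z.card := Finset.card_erase_lt_of_mem hz
    omega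
  have hspr : ∀ j, 1 ≤ j → j ≤ maxLvlHidden G (U ∪ W) →
      hLevel G j (↑B : Set V) + j ≤ U.card + W.card + minLvl G (U ∪ W) := by
    intro j h1 h2
    have h3 := hspread (U ∪ W) hXne htight hconn j h1 h2
    have hfamH : ∃ n, n ∈ {n | ∃ Zh : Finset V, (∀ z ∈ Zh, j ≤ G.lvl z) ∧
        (∀ y ∈ hiddenSet G (U ∪ W), j ≤ G.lvl y → Hides G.pred (↑Zh) y) ∧ Zh.card = n} := by
      refine ⟨_, (Set.toFinite (hiddenSet G (U ∪ W) ∩ {y | j ≤ G.lvl y})).toFinset,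
        fun z hz => ?_, fun y hy hyl => ?_, rfl⟩
      · exact ((Set.Finite.mem_toFinset _).mp hz).2
      · refine hides_self ?_
        rw [Set.Finite.coe_toFinset]
        exact ⟨hy, hyl⟩
    have hmemH : hLevel G j (hiddenSet G (U ∪ W)) ∈ {n | ∃ Zh : Finset V,
        (∀ z ∈ Zh, j ≤ G.lvl z) ∧
        (∀ y ∈ hiddenSet G (U ∪ W), j ≤ G.lvl y → Hides G.pred (↑Zh) y) ∧ Zh.card = n} :=
      Nat.sInf_mem hfamH
    obtain ⟨Zh, hZhlvl, hZhhide, hZhcard⟩ := hmemH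
    have h4 : hLevel G j (↑B : Set V) ≤ Zh.card :=
      Nat.sInf_le ⟨Zh, hZhlvl, fun y hy hyl => hZhhide y (hBhid y (by exact_mod_cast hy)) hyl, rfl⟩
    have h5 : (U ∪ W).card ≤ U.card + W.card := Finset.card_union_le _ _
    omega
  refine ⟨Z, ?_, ?_, ?_⟩
  · intro w hw
    exact hides_mono (Finset.coe_subset.mpr Finset.subset_union_left) (hZhide w hw)
  · intro j
    by_cases hne : (Z.filter fun z => j ≤ G.lvl z).Nonempty
    · refine ⟨min j (minLvl G (U ∪ W)), min_le_left _ _, ?_⟩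
      have hUfull : U.filter (fun u => min j (minLvl G (U ∪ W)) ≤ G.lvl u) = U :=
        Finset.filter_true_of_mem fun u hu =>
          le_trans (min_le_right _ _) (hmle u (Finset.mem_union_left _ hu))
      have hmjU : mjMeasure G U (min j (minLvl G (U ∪ W)))
          = min j (minLvl G (U ∪ W)) + 2 * U.card := by
        rw [mjMeasure, hUfull, if_pos hUne]
      have hmjZ : mjMeasure G Z j = j + 2 * (Z.filter fun z => j ≤ G.lvl z).card := by
        rw [mjMeasure, if_pos hne]
      rw [hmjZ, hmjU]
      have h1 := hnest j
      have h2 := hBle j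
      by_cases hjm : j ≤ minLvl G (U ∪ W)
      · rw [min_eq_left hjm]; omega
      · push_neg at hjm
        rw [min_eq_right hjm.le]
        by_cases hjw : j < minLvl G (U ∪ W) + 2 * W.card
        · omega
        · push_neg at hjw
          obtain ⟨z, hz⟩ := hne
          obtain ⟨hzZ, hzlvl⟩ := Finset.mem_filter.mp hz
          obtain ⟨b, hbB, hzb⟩ := htop z hzZ
          have hjmax : j ≤ maxLvlHidden G (U ∪ W) :=
            le_trans (le_trans hzlvl hzb) (hmaxb b hbB)
          have h3 := hspr j (by omega) hjmax
          omega
    · exact ⟨j, le_rfl, by simp [mjMeasure, hne]⟩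
  · by_cases hZB : hLevel G 0 (↑B : Set V) = B.card
    · exact Or.inl (hZeq hZB)
    · right
      have := hBle 0
      omega
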